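/- Let n ≥ 1, let q ∈ ℂ with q ≠ 0 and q ≠ −1, and let U = (u_{ij}), V = (v^{kl}) be n×n complex matrices satisfying tr(U·Vᵀ) = 1 and U·V·Uᵀ·Vᵀ = q(1+q)^{−2}·I. Let S be the TL-type operator attached to q, U, V. Then for all indices k, l: Σ_{i₁,i₂,j₁,j₂,m} u_{i₁i₂} · v^{j₁j₂} · S_{j₂k}^{m i₂} · S_{j₁m}^{l i₁} = −q·(1+q)·M_k^l, where M_k^l := Σ_a u_{a k} · v^{l a}. -/
import Mathlib


open Matrix

/-- The TL-type (rank-2 even Hecke symmetry) operator attached to `q`, `U`, `V`: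
the `n² × n²` matrix with entry `S_{ij}^{kl} = q·δ_i^k·δ_j^l − (1+q)·u_{ij}·v^{kl}`
at row `(i,j)` and column `(k,l)`. -/
def TLop (n : ℕ) (q : ℂ) (U V : Matrix (Fin n) (Fin n) ℂ) :
    Matrix (Fin n × Fin n) (Fin n × Fin n) ℂ :=
  fun p r =>
    q * (if p.1 = r.1 then 1 else 0) * (if p.2 = r.2 then 1 else 0)
      - (1 + q) * U p.1 p.2 * V r.1 r.2

lemma mul_comm_of_eq_smul_one' {n : ℕ} (c : ℂ) (hc : c ≠ 0)
    (A B : Matrix (Fin n) (Fin n) ℂ) (h : A * B = c • 1) : B * A = c • 1 := by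
  have h1 : A * (c⁻¹ • B) = 1 := by
    rw [Matrix.mul_smul, h, smul_smul, inv_mul_cancel₀ hc, one_smul]
  have h2 : (c⁻¹ • B) * A = 1 := mul_eq_one_comm.mp h1
  calc B * A = c • ((c⁻¹ • B) * A) := by
        rw [Matrix.smul_mul, smul_smul, mul_inv_cancel₀ hc, one_smul]
    _ = c • 1 := by rw [h2]

/-- Proposition 1, first formula, rank `p = 2`: if `U`, `V` satisfy
system (5) then for all `k`, `l`:
`Σ u_{i₁i₂}·v^{j₁j₂}·S_{j₂k}^{m i₂}·S_{j₁m}^{l i₁} = −q·(1+q)·M_k^l`,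
where `M_k^l = Σ_a u_{ak}·v^{la}`. -/
theorem pairing_det_t_first (n : ℕ) (hn : 1 ≤ n) (q : ℂ) (hq0 : q ≠ 0)
    (hq1 : q ≠ -1) (U V : Matrix (Fin n) (Fin n) ℂ)
    (h5a : (U * Vᵀ).trace = 1)
    (h5b : U * V * Uᵀ * Vᵀ = (q * ((1 + q) ^ 2)⁻¹) • (1 : Matrix (Fin n) (Fin n) ℂ))
    (k l : Fin n) :
    ∑ i₁ : Fin n, ∑ i₂ : Fin n, ∑ j₁ : Fin n, ∑ j₂ : Fin n, ∑ m : Fin n,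
        U i₁ i₂ * V j₁ j₂ * TLop n q U V (j₂, k) (m, i₂) * TLop n q U V (j₁, m) (l, i₁)
      = -q * (1 + q) * ∑ a : Fin n, U a k * V l a := by
  have hq : (1 + q) ≠ 0 := fun h => hq1 (by linear_combination h)
  set c : ℂ := q * ((1 + q) ^ 2)⁻¹ with hcdef
  have hc : c ≠ 0 := mul_ne_zero hq0 (inv_ne_zero (pow_ne_zero _ hq))
  -- derive U * Vᵀ * Uᵀ * V = c • 1
  have e1 : (U * V) * (Uᵀ * Vᵀ) = c • 1 := by rw [← Matrix.mul_assoc]; exact h5b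
  have e2 : (Uᵀ * Vᵀ) * (U * V) = c • 1 := mul_comm_of_eq_smul_one' c hc _ _ e1
  have e3 : Uᵀ * (Vᵀ * U * V) = c • 1 := by rw [← e2]; noncomm_ring
  have e4 : (Vᵀ * U * V) * Uᵀ = c • 1 := mul_comm_of_eq_smul_one' c hc _ _ e3
  have h5b' : U * Vᵀ * Uᵀ * V = c • (1 : Matrix (Fin n) (Fin n) ℂ) := by
    have e5 : (Vᵀ * U * V * Uᵀ)ᵀ = (c • (1 : Matrix (Fin n) (Fin n) ℂ))ᵀ := by rw [e4]
    simpa [Matrix.transpose_mul, Matrix.mul_assoc] using e5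
  -- key entrywise identity
  have L1 : ∀ i j : Fin n, ∑ i₂ : Fin n, ∑ j₁ : Fin n, ∑ m : Fin n,
      U i i₂ * V m i₂ * U j₁ m * V j₁ j = c * (if i = j then 1 else 0) := by
    intro i j
    have h := congr_fun (congr_fun h5b' i) j
    simp [Matrix.mul_apply, Matrix.one_apply, Finset.sum_mul, Finset.mul_sum, mul_ite] at h
    rw [Finset.sum_comm]
    conv_lhs => enter [2, a]; rw [Finset.sum_comm]
    rw [h]
    split_ifs <;> ring
  -- trace identity
  have L2 : ∑ i : Fin n, ∑ j : Fin n, U i j * V i j = 1 := by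
    have := h5a
    simpa [Matrix.trace, Matrix.diag, Matrix.mul_apply] using this
  -- the four partial sums (in the reordered index order i₁, j₂, i₂, j₁, m)
  have T1 : ∑ i₁ : Fin n, ∑ j₂ : Fin n, ∑ i₂ : Fin n, ∑ j₁ : Fin n, ∑ m : Fin n,
      (if j₂ = m then (1:ℂ) else 0) * (if k = i₂ then 1 else 0) *
      (if j₁ = l then 1 else 0) * (if m = i₁ then 1 else 0) * (U i₁ i₂ * V j₁ j₂)
      = ∑ a : Fin n, U a k * V l a := by
    simp [mul_ite, ite_mul, Finset.sum_ite_eq, Finset.sum_ite_eq']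
  have T2 : ∑ i₁ : Fin n, ∑ j₂ : Fin n, ∑ i₂ : Fin n, ∑ j₁ : Fin n, ∑ m : Fin n,
      (if j₂ = m then (1:ℂ) else 0) * (if k = i₂ then 1 else 0) *
      (U j₁ m * V l i₁) * (U i₁ i₂ * V j₁ j₂)
      = (∑ a : Fin n, U a k * V l a) * (∑ i : Fin n, ∑ j : Fin n, U i j * V i j) := by
    simp [mul_ite, ite_mul, Finset.sum_ite_eq, Finset.sum_ite_eq', Finset.mul_sum,
      Finset.sum_mul]
    rw [Finset.sum_comm]
    conv_lhs => enter [2, a]; rw [Finset.sum_comm]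
    rw [Finset.sum_comm]
    exact Finset.sum_congr rfl fun a _ => Finset.sum_congr rfl fun b _ =>
      Finset.sum_congr rfl fun d _ => by ring
  have T3 : ∑ i₁ : Fin n, ∑ j₂ : Fin n, ∑ i₂ : Fin n, ∑ j₁ : Fin n, ∑ m : Fin n,
      (if j₁ = l then (1:ℂ) else 0) * (if m = i₁ then 1 else 0) *
      (U j₂ k * V m i₂) * (U i₁ i₂ * V j₁ j₂)
      = (∑ a : Fin n, U a k * V l a) * (∑ i : Fin n, ∑ j : Fin n, U i j * V i j) := by
    simp [mul_ite, ite_mul, Finset.sum_ite_eq, Finset.sum_ite_eq', Finset.mul_sum,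
      Finset.sum_mul]
    conv_lhs => enter [2, a]; rw [Finset.sum_comm]
    exact Finset.sum_congr rfl fun a _ => Finset.sum_congr rfl fun b _ =>
      Finset.sum_congr rfl fun d _ => by ring
  have T4 : ∑ i₁ : Fin n, ∑ j₂ : Fin n, ∑ i₂ : Fin n, ∑ j₁ : Fin n, ∑ m : Fin n,
      (U j₂ k * V m i₂) * (U j₁ m * V l i₁) * (U i₁ i₂ * V j₁ j₂)
      = c * ∑ a : Fin n, U a k * V l a := by
    calc ∑ i₁ : Fin n, ∑ j₂ : Fin n, ∑ i₂ : Fin n, ∑ j₁ : Fin n, ∑ m : Fin n,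
          (U j₂ k * V m i₂) * (U j₁ m * V l i₁) * (U i₁ i₂ * V j₁ j₂)
        = ∑ i₁ : Fin n, ∑ j₂ : Fin n, (U j₂ k * V l i₁) *
            (∑ i₂ : Fin n, ∑ j₁ : Fin n, ∑ m : Fin n,
              U i₁ i₂ * V m i₂ * U j₁ m * V j₁ j₂) := by
          refine Finset.sum_congr rfl fun i₁ _ => Finset.sum_congr rfl fun j₂ _ => ?_
          simp only [Finset.mul_sum]
          exact Finset.sum_congr rfl fun a _ => Finset.sum_congr rfl fun b _ =>
            Finset.sum_congr rfl fun d _ => by ring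
      _ = ∑ i₁ : Fin n, ∑ j₂ : Fin n, (U j₂ k * V l i₁) *
            (c * (if i₁ = j₂ then 1 else 0)) := by
          refine Finset.sum_congr rfl fun i₁ _ => Finset.sum_congr rfl fun j₂ _ => ?_
          rw [L1 i₁ j₂]
      _ = c * ∑ a : Fin n, U a k * V l a := by
          simp [mul_ite, Finset.sum_ite_eq, Finset.mul_sum]
          exact Finset.sum_congr rfl fun a _ => by ring
  -- reorder sums in the goal and split into the four terms
  simp only [TLop]
  conv_lhs => enter [2, i₁, 2, i₂]; rw [Finset.sum_comm]
  conv_lhs => enter [2, i₁]; rw [Finset.sum_comm]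
  have expand : ∀ i₁ j₂ i₂ j₁ m : Fin n,
      U i₁ i₂ * V j₁ j₂ *
        (q * (if j₂ = m then (1:ℂ) else 0) * (if k = i₂ then 1 else 0)
          - (1 + q) * U j₂ k * V m i₂) *
        (q * (if j₁ = l then 1 else 0) * (if m = i₁ then 1 else 0)
          - (1 + q) * U j₁ m * V l i₁)
      = (q * q) * ((if j₂ = m then (1:ℂ) else 0) * (if k = i₂ then 1 else 0) *
          (if j₁ = l then 1 else 0) * (if m = i₁ then 1 else 0) * (U i₁ i₂ * V j₁ j₂))
        - (q * (1 + q)) * ((if j₂ = m then (1:ℂ) else 0) * (if k = i₂ then 1 else 0) *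
          (U j₁ m * V l i₁) * (U i₁ i₂ * V j₁ j₂))
        - (q * (1 + q)) * ((if j₁ = l then (1:ℂ) else 0) * (if m = i₁ then 1 else 0) *
          (U j₂ k * V m i₂) * (U i₁ i₂ * V j₁ j₂))
        + ((1 + q) * (1 + q)) * ((U j₂ k * V m i₂) * (U j₁ m * V l i₁) *
          (U i₁ i₂ * V j₁ j₂)) := by
    intro i₁ j₂ i₂ j₁ m; ring
  calc ∑ i₁ : Fin n, ∑ j₂ : Fin n, ∑ i₂ : Fin n, ∑ j₁ : Fin n, ∑ m : Fin n,
        U i₁ i₂ * V j₁ j₂ *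
          (q * (if j₂ = m then (1:ℂ) else 0) * (if k = i₂ then 1 else 0)
            - (1 + q) * U j₂ k * V m i₂) *
          (q * (if j₁ = l then 1 else 0) * (if m = i₁ then 1 else 0)
            - (1 + q) * U j₁ m * V l i₁)
      = (q * q) * (∑ i₁ : Fin n, ∑ j₂ : Fin n, ∑ i₂ : Fin n, ∑ j₁ : Fin n, ∑ m : Fin n,
          (if j₂ = m then (1:ℂ) else 0) * (if k = i₂ then 1 else 0) *
          (if j₁ = l then 1 else 0) * (if m = i₁ then 1 else 0) * (U i₁ i₂ * V j₁ j₂))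
        - (q * (1 + q)) * (∑ i₁ : Fin n, ∑ j₂ : Fin n, ∑ i₂ : Fin n, ∑ j₁ : Fin n, ∑ m : Fin n,
          (if j₂ = m then (1:ℂ) else 0) * (if k = i₂ then 1 else 0) *
          (U j₁ m * V l i₁) * (U i₁ i₂ * V j₁ j₂))
        - (q * (1 + q)) * (∑ i₁ : Fin n, ∑ j₂ : Fin n, ∑ i₂ : Fin n, ∑ j₁ : Fin n, ∑ m : Fin n,
          (if j₁ = l then (1:ℂ) else 0) * (if m = i₁ then 1 else 0) *
          (U j₂ k * V m i₂) * (U i₁ i₂ * V j₁ j₂))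
        + ((1 + q) * (1 + q)) * (∑ i₁ : Fin n, ∑ j₂ : Fin n, ∑ i₂ : Fin n, ∑ j₁ : Fin n, ∑ m : Fin n,
          (U j₂ k * V m i₂) * (U j₁ m * V l i₁) * (U i₁ i₂ * V j₁ j₂)) := by
        simp only [Finset.mul_sum, ← Finset.sum_sub_distrib, ← Finset.sum_add_distrib]
        exact Finset.sum_congr rfl fun i₁ _ => Finset.sum_congr rfl fun j₂ _ =>
          Finset.sum_congr rfl fun i₂ _ => Finset.sum_congr rfl fun j₁ _ =>
          Finset.sum_congr rfl fun m _ => expand i₁ j₂ i₂ j₁ m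
    _ = -q * (1 + q) * ∑ a : Fin n, U a k * V l a := by
        rw [T1, T2, T3, T4, L2, hcdef]
        field_simp
        ring
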